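/- arXiv:1202.1773 — 2 statements merged into one kernel-verified Lean document; each statement's English description precedes it below -/
import Mathlib

section
/- For every j ≥ 0 and every real ω with |ω| ≤ 1, Σ_{k=-2^j}^{2^j} |ψ̂₂(k + 2^j ω)|² = 1. -/
noncomputable def v (x : ℝ) : ℝ :=
  if x < 0 then 0
  else if x ≤ 1 then 35*x^4 - 84*x^5 + 70*x^6 - 20*x^7
  else 1

noncomputable def psi2 (ω : ℝ) : ℝ :=
  if ω ≤ 0 then Real.sqrt (v (1 + ω)) else Real.sqrt (v (1 - ω))

lemma v_of_nonpos (x : ℝ) (h : x ≤ 0) : v x = 0 := by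
  rcases h.lt_or_eq with h | h
  · simp [v, h]
  · subst h; norm_num [v]

lemma v_nonneg' (x : ℝ) (h0 : 0 ≤ x) (h1 : x ≤ 1) : 0 ≤ v x := by
  unfold v
  rw [if_neg (not_lt.mpr h0), if_pos h1]
  nlinarith [mul_nonneg (mul_nonneg (pow_nonneg h0 4) (sub_nonneg.mpr h1)) (sq_nonneg (4*x-5)),
    pow_nonneg h0 4, mul_nonneg (pow_nonneg h0 4) (sub_nonneg.mpr h1)]

lemma v_add (x : ℝ) (h0 : 0 ≤ x) (h1 : x ≤ 1) : v x + v (1 - x) = 1 := by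
  unfold v
  rw [if_neg (not_lt.mpr h0), if_pos h1, if_neg (not_lt.mpr (by linarith)),
    if_pos (by linarith)]
  ring

lemma psi2_of_le_neg_one (t : ℝ) (h : t ≤ -1) : psi2 t = 0 := by
  unfold psi2
  rw [if_pos (by linarith), v_of_nonpos _ (by linarith), Real.sqrt_zero]

lemma psi2_of_one_le (t : ℝ) (h : 1 ≤ t) : psi2 t = 0 := by
  unfold psi2
  rw [if_neg (by push_neg; linarith), v_of_nonpos _ (by linarith), Real.sqrt_zero]

lemma psi2_sq_right (t : ℝ) (h0 : 0 ≤ t) (h1 : t ≤ 1) : psi2 t ^ 2 = v (1 - t) := by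
  unfold psi2
  rcases h0.lt_or_eq with h | h
  · rw [if_neg (by push_neg; linarith), Real.sq_sqrt (v_nonneg' _ (by linarith) (by linarith))]
  · rw [← h, if_pos le_rfl, Real.sq_sqrt (v_nonneg' _ (by norm_num) (by norm_num))]
    norm_num

lemma psi2_sq_left (t : ℝ) (h0 : 0 ≤ t) (h1 : t ≤ 1) : psi2 (t - 1) ^ 2 = v t := by
  unfold psi2
  rw [if_pos (by linarith), show 1 + (t - 1) = t by ring,
    Real.sq_sqrt (v_nonneg' _ h0 h1)]

theorem psi2_shear_sum :
    ∀ j : ℕ, ∀ ω : ℝ, |ω| ≤ 1 →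
      ∑ k ∈ Finset.Icc (-(2^j : ℤ)) (2^j : ℤ),
        |psi2 ((k : ℝ) + (2:ℝ)^j * ω)| ^ 2 = 1 := by
  intro j ω hω
  set N : ℤ := 2 ^ j with hN
  set x : ℝ := (2:ℝ)^j * ω with hx
  have hNx : (N:ℝ) = (2:ℝ)^j := by push_cast [hN]; ring
  have habs : |x| ≤ (N:ℝ) := by
    rw [hx, abs_mul, hNx, abs_of_pos (by positivity)]
    calc (2:ℝ)^j * |ω| ≤ (2:ℝ)^j * 1 := by
          exact mul_le_mul_of_nonneg_left hω (by positivity)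
      _ = (2:ℝ)^j := by ring
  have hx1 : -(N:ℝ) ≤ x := neg_le_of_abs_le habs
  have hx2 : x ≤ (N:ℝ) := le_of_abs_le habs
  set m : ℤ := ⌊x⌋ with hm
  have hmx : (m:ℝ) ≤ x := Int.floor_le x
  have hmx' : x < (m:ℝ) + 1 := Int.lt_floor_add_one x
  have hmN : -N ≤ m := by
    rw [hm, Int.le_floor]; exact_mod_cast hx1
  have hmN' : m ≤ N := by
    have := Int.floor_le_floor hx2
    rwa [Int.floor_intCast] at this
  set t : ℝ := x - (m:ℝ) with ht
  have ht0 : 0 ≤ t := by simp [ht]; linarith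
  have ht1 : t < 1 := by simp [ht]; linarith
  have f1 : |psi2 (((-m : ℤ) : ℝ) + x)| ^ 2 = v (1 - t) := by
    rw [sq_abs, show ((-m : ℤ) : ℝ) + x = t by push_cast [ht]; ring]
    exact psi2_sq_right t ht0 ht1.le
  have f2 : |psi2 (((-m - 1 : ℤ) : ℝ) + x)| ^ 2 = v t := by
    rw [sq_abs, show ((-m - 1 : ℤ) : ℝ) + x = t - 1 by push_cast [ht]; ring]
    exact psi2_sq_left t ht0 ht1.le
  have key : ∀ k ∈ Finset.Icc (-N) N, k ≠ -m - 1 → k ≠ -m →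
      |psi2 ((k : ℝ) + x)| ^ 2 = 0 := by
    intro k _ h1 h2
    rcases lt_or_ge k (-m) with hk | hk
    · have hk' : k ≤ -m - 2 := by omega
      have : (k:ℝ) + x ≤ -1 := by
        have : (k:ℝ) ≤ (-m : ℝ) - 2 := by exact_mod_cast hk'
        linarith
      rw [psi2_of_le_neg_one _ this]; norm_num
    · have hk' : -m + 1 ≤ k := by omega
      have : 1 ≤ (k:ℝ) + x := by
        have : (-m : ℝ) + 1 ≤ (k:ℝ) := by exact_mod_cast hk'
        linarith
      rw [psi2_of_one_le _ this]; norm_num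
  rcases eq_or_lt_of_le hmN' with hcase | hcase
  · -- m = N, so x = N, t = 0
    have hxN2 : x = (N:ℝ) := by
      have : (N:ℝ) ≤ x := by rw [← hcase]; exact hmx
      linarith
    have ht00 : t = 0 := by rw [ht, hxN2, hcase]; ring
    have hsum : ∑ k ∈ Finset.Icc (-N) N, |psi2 ((k : ℝ) + x)| ^ 2
        = |psi2 (((-m : ℤ) : ℝ) + x)| ^ 2 := by
      apply Finset.sum_eq_single_of_mem
      · rw [hcase]; simp [Finset.mem_Icc]; omega
      · intro k hkmem hkne
        rcases eq_or_ne k (-m - 1) with rfl | hne1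
        · rw [show ((-m - 1 : ℤ) : ℝ) + x = t - 1 by push_cast [ht]; ring, ht00]
          rw [psi2_of_le_neg_one _ (by norm_num)]; norm_num
        · exact key k hkmem hne1 hkne
    rw [hsum, f1, ht00]
    have := v_add 0 le_rfl (by norm_num)
    rw [v_of_nonpos 0 le_rfl] at this
    linarith
  · have hsub : ({-m - 1, -m} : Finset ℤ) ⊆ Finset.Icc (-N) N := by
      intro k hk
      simp only [Finset.mem_insert, Finset.mem_singleton] at hk
      simp only [Finset.mem_Icc]
      rcases hk with rfl | rfl <;> omega
    have hsum : ∑ k ∈ Finset.Icc (-N) N, |psi2 ((k : ℝ) + x)| ^ 2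
        = ∑ k ∈ ({-m - 1, -m} : Finset ℤ), |psi2 ((k : ℝ) + x)| ^ 2 := by
      refine (Finset.sum_subset hsub ?_).symm
      intro k hkmem hknot
      simp only [Finset.mem_insert, Finset.mem_singleton, not_or] at hknot
      exact key k hkmem hknot.1 hknot.2
    rw [hsum, Finset.sum_pair (by omega), f1, f2]
    exact v_add t ht0 ht1.le
end

section
/- The truncated sum Σ_{j=0}^{j₀-1} |ψ̂₁(2^{-2j}ω)|² equals 1 for 1 ≤ |ω| ≤ 2^{2(j₀-1)+1}, equals sin²((π/2)v(2|ω|-1)) for 1/2 < |ω| < 1, equals cos²((π/2)v(2^{-2j₀+1}|ω| - 1)) for 2^{2j₀-1} < |ω| < 2^{2j₀}, and is 0 for |ω| ≤ 1/2 or |ω| ≥ 2^{2j₀}. -/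
noncomputable def b (ω : ℝ) : ℝ :=
  if 1 ≤ |ω| ∧ |ω| ≤ 2 then Real.sin (Real.pi/2 * v (|ω| - 1))
  else if 2 < |ω| ∧ |ω| ≤ 4 then Real.cos (Real.pi/2 * v (|ω|/2 - 1))
  else 0

noncomputable def psi1 (ω : ℝ) : ℝ := Real.sqrt (b (2*ω) ^ 2 + b ω ^ 2)

noncomputable def T (j₀ : ℕ) (ω : ℝ) : ℝ :=
  ∑ j ∈ Finset.range j₀, |psi1 ((2:ℝ) ^ (-(2 * (j:ℤ))) * ω)| ^ 2

lemma v_zero : v 0 = 0 := by norm_num [v]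

lemma v_one : v 1 = 1 := by norm_num [v]

lemma b_small {x : ℝ} (h : |x| ≤ 1) : b x = 0 := by
  rcases eq_or_lt_of_le h with h | h
  · rw [b, if_pos ⟨le_of_eq h.symm, by linarith⟩, h]
    norm_num [v_zero]
  · rw [b, if_neg (by rintro ⟨h1, -⟩; linarith), if_neg (by rintro ⟨h1, -⟩; linarith)]

lemma b_big {x : ℝ} (h : 4 ≤ |x|) : b x = 0 := by
  rcases eq_or_lt_of_le h with h | h
  · rw [b, if_neg (by rintro ⟨-, h2⟩; linarith), if_pos ⟨by linarith, le_of_eq h.symm⟩, ← h]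
    norm_num [v_one]
  · rw [b, if_neg (by rintro ⟨-, h2⟩; linarith), if_neg (by rintro ⟨-, h2⟩; linarith)]

lemma b_low {x : ℝ} (h1 : 1 ≤ |x|) (h2 : |x| ≤ 2) :
    b x = Real.sin (Real.pi/2 * v (|x| - 1)) := by
  rw [b, if_pos ⟨h1, h2⟩]

lemma b_high {x : ℝ} (h1 : 2 ≤ |x|) (h2 : |x| ≤ 4) :
    b x = Real.cos (Real.pi/2 * v (|x|/2 - 1)) := by
  rcases eq_or_lt_of_le h1 with h | h
  · rw [b, if_pos ⟨by linarith, le_of_eq h.symm⟩, ← h]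
    norm_num [v_zero, v_one]
  · rw [b, if_neg (by rintro ⟨-, h2⟩; linarith), if_pos ⟨h, h2⟩]

lemma psi1_sq (x : ℝ) : |psi1 x| ^ 2 = b (2*x) ^ 2 + b x ^ 2 := by
  rw [sq_abs, psi1, Real.sq_sqrt (by positivity)]

lemma abs_two_mul (x : ℝ) : |2 * x| = 2 * |x| := by
  rw [abs_mul]; norm_num

lemma psi1_sq_zero_small {x : ℝ} (h : |x| ≤ 1/2) : |psi1 x| ^ 2 = 0 := by
  rw [psi1_sq, b_small (x := 2*x) (by rw [abs_two_mul]; linarith),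
    b_small (x := x) (by linarith)]
  ring

lemma psi1_sq_zero_big {x : ℝ} (h : 4 ≤ |x|) : |psi1 x| ^ 2 = 0 := by
  rw [psi1_sq, b_big h, b_big (by rw [abs_two_mul]; linarith)]
  ring

lemma psi1_sq_one {x : ℝ} (h1 : 1 ≤ |x|) (h2 : |x| ≤ 2) : |psi1 x| ^ 2 = 1 := by
  rw [psi1_sq, b_low h1 h2, b_high (x := 2*x) (by rw [abs_two_mul]; linarith)
    (by rw [abs_two_mul]; linarith), abs_two_mul]
  have : 2 * |x| / 2 - 1 = |x| - 1 := by ring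
  rw [this, Real.cos_sq_add_sin_sq]

lemma psi1_sq_low {x : ℝ} (h1 : 1/2 ≤ |x|) (h2 : |x| ≤ 1) :
    |psi1 x| ^ 2 = Real.sin (Real.pi/2 * v (2*|x| - 1)) ^ 2 := by
  rw [psi1_sq, b_small h2, b_low (x := 2*x) (by rw [abs_two_mul]; linarith)
    (by rw [abs_two_mul]; linarith), abs_two_mul]
  ring

lemma psi1_sq_high {x : ℝ} (h1 : 2 ≤ |x|) (h2 : |x| ≤ 4) :
    |psi1 x| ^ 2 = Real.cos (Real.pi/2 * v (|x|/2 - 1)) ^ 2 := by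
  rw [psi1_sq, b_high h1 h2, b_big (x := 2*x) (by rw [abs_two_mul]; linarith)]
  ring

lemma zpow2_pos (e : ℤ) : (0:ℝ) < 2 ^ e := by positivity

lemma abs_zpow_mul (e : ℤ) (ω : ℝ) : |(2:ℝ) ^ e * ω| = 2 ^ e * |ω| := by
  rw [abs_mul, abs_of_pos (zpow2_pos e)]

lemma zpow2_le {a c : ℤ} (h : a ≤ c) : (2:ℝ) ^ a ≤ 2 ^ c :=
  zpow_le_zpow_right₀ one_le_two h

lemma T_zero_small (j₀ : ℕ) {ω : ℝ} (h : |ω| ≤ 1/2) : T j₀ ω = 0 := by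
  refine Finset.sum_eq_zero fun j _ => ?_
  apply psi1_sq_zero_small
  rw [abs_zpow_mul]
  have h1 : (2:ℝ) ^ (-(2 * (j:ℤ))) ≤ 1 := by
    have := zpow2_le (a := -(2*(j:ℤ))) (c := 0) (by omega)
    simpa using this
  have h5 := mul_le_mul h1 h (abs_nonneg ω) zero_le_one
  linarith

lemma T_mid {j₀ : ℕ} (hj₀ : 1 ≤ j₀) {ω : ℝ} (h1 : 1/2 ≤ |ω|) (h2 : |ω| ≤ 1) :
    T j₀ ω = Real.sin (Real.pi/2 * v (2*|ω| - 1)) ^ 2 := by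
  rw [T, Finset.sum_eq_single_of_mem 0 (Finset.mem_range.2 hj₀)]
  · norm_num
    rw [← sq_abs]
    exact psi1_sq_low h1 h2
  · intro j _ hj
    apply psi1_sq_zero_small
    rw [abs_zpow_mul]
    have h3 : (2:ℝ) ^ (-(2 * (j:ℤ))) ≤ 2 ^ (-2 : ℤ) := zpow2_le (by omega)
    have h4 : (2:ℝ) ^ (-2 : ℤ) = 1/4 := by norm_num
    have h5 := mul_le_mul (h3.trans_eq h4) h2 (abs_nonneg ω) (by norm_num)
    linarith

lemma T_zero_big (j₀ : ℕ) {ω : ℝ} (h : (2:ℝ) ^ ((2*j₀ : ℕ) : ℤ) ≤ |ω|) : T j₀ ω = 0 := by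
  refine Finset.sum_eq_zero fun j hj => ?_
  apply psi1_sq_zero_big
  rw [abs_zpow_mul]
  have hj' : j < j₀ := Finset.mem_range.1 hj
  have key : (4:ℝ) ≤ 2 ^ (-(2*(j:ℤ))) * 2 ^ ((2*j₀ : ℕ) : ℤ) := by
    rw [← zpow_add₀ (two_ne_zero)]
    have : (4:ℝ) = 2 ^ (2:ℤ) := by norm_num
    rw [this]
    exact zpow2_le (by push_cast; omega)
  have h0 := zpow2_pos (-(2 * (j:ℤ)))
  have h5 := mul_le_mul_of_nonneg_left h h0.le
  linarith

lemma T_succ (n : ℕ) (ω : ℝ) :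
    T (n+1) ω = T n ((2:ℝ) ^ (-2 : ℤ) * ω) + |psi1 ω| ^ 2 := by
  rw [T, Finset.sum_range_succ', T]
  congr 1
  · refine Finset.sum_congr rfl fun i _ => ?_
    congr 2
    rw [← mul_assoc, ← zpow_add₀ (two_ne_zero : (2:ℝ) ≠ 0)]
    congr 1
    push_cast; ring
  · norm_num

lemma T_one (m : ℕ) {ω : ℝ} (h1 : 1 ≤ |ω|) (h2 : |ω| ≤ 2 ^ ((2*m+1 : ℕ) : ℤ)) :
    T (m+1) ω = 1 := by
  induction m generalizing ω with
  | zero =>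
      have h2' : |ω| ≤ 2 := by
        have : ((2*0+1 : ℕ) : ℤ) = 1 := by norm_num
        rw [this, zpow_one] at h2
        exact h2
      rw [T, Finset.sum_range_one,
        show (2:ℝ) ^ (-(2*((0:ℕ):ℤ))) * ω = ω by norm_num]
      exact psi1_sq_one h1 h2'

  | succ m ih =>
      rw [T_succ]
      have habs : |(2:ℝ) ^ (-2 : ℤ) * ω| = 1/4 * |ω| := by
        rw [abs_zpow_mul]; norm_num
      rcases le_or_gt |ω| 2 with hc | hc
      · rw [psi1_sq_one h1 hc, T_zero_small _ (by rw [habs]; linarith)]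
        norm_num
      · rcases le_or_gt |ω| 4 with hc2 | hc2
        · rw [psi1_sq_high hc.le hc2, T_mid (Nat.le_add_left 1 m)
            (by rw [habs]; linarith) (by rw [habs]; linarith), habs]
          have : 2 * (1/4 * |ω|) - 1 = |ω|/2 - 1 := by ring
          rw [this, Real.sin_sq_add_cos_sq]
        · rw [psi1_sq_zero_big hc2.le, ih (by rw [habs]; linarith)]
          · ring
          · rw [habs]
            have h4 : (2:ℝ) ^ ((2*(m+1)+1 : ℕ) : ℤ) = 4 * 2 ^ ((2*m+1 : ℕ) : ℤ) := by
              rw [show (4:ℝ) = 2 ^ (2:ℤ) by norm_num, ← zpow_add₀ (two_ne_zero)]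
              congr 1; push_cast; ring
            rw [h4] at h2
            linarith

theorem truncated_psi1_sum (j₀ : ℕ) (hj₀ : 1 ≤ j₀) :
    (∀ ω : ℝ, 1 ≤ |ω| → |ω| ≤ (2:ℝ) ^ (2*(j₀-1)+1) → T j₀ ω = 1) ∧
    (∀ ω : ℝ, 1/2 < |ω| → |ω| < 1 →
      T j₀ ω = Real.sin (Real.pi/2 * v (2*|ω| - 1)) ^ 2) ∧
    (∀ ω : ℝ, (2:ℝ) ^ (2*j₀-1) < |ω| → |ω| < (2:ℝ) ^ (2*j₀) →
      T j₀ ω = Real.cos (Real.pi/2 * v ((2:ℝ) ^ ((1:ℤ) - 2*j₀) * |ω| - 1)) ^ 2) ∧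
    (∀ ω : ℝ, |ω| ≤ 1/2 ∨ (2:ℝ) ^ (2*j₀) ≤ |ω| → T j₀ ω = 0) := by
  obtain ⟨m, rfl⟩ : ∃ m, j₀ = m + 1 := ⟨j₀ - 1, by omega⟩
  refine ⟨?_, ?_, ?_, ?_⟩
  · intro ω h1 h2
    apply T_one m h1
    have : ((2*m+1 : ℕ) : ℤ) = ((2*(m+1-1)+1 : ℕ) : ℤ) := by push_cast; omega
    rw [this, zpow_natCast]
    exact h2
  · intro ω h1 h2
    exact T_mid (Nat.le_add_left 1 m) h1.le h2.le
  · intro ω h1 h2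
    have e1 : (2*(m+1)-1 : ℕ) = 2*m+1 := by omega
    have e2 : (2*(m+1) : ℕ) = 2*m+2 := by omega
    rw [e1] at h1; rw [e2] at h2
    have hp := zpow2_pos (-(2*(m:ℤ)))
    have e3 : (2:ℝ) ^ (-(2*(m:ℤ))) * 2 ^ (2*m+1 : ℕ) = 2 := by
      rw [← zpow_natCast (2:ℝ) (2*m+1), ← zpow_add₀ (two_ne_zero : (2:ℝ) ≠ 0)]
      have : (-(2*(m:ℤ)) + ((2*m+1 : ℕ) : ℤ)) = 1 := by push_cast; ring
      rw [this, zpow_one]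
    have e4 : (2:ℝ) ^ (-(2*(m:ℤ))) * 2 ^ (2*m+2 : ℕ) = 4 := by
      rw [← zpow_natCast (2:ℝ) (2*m+2), ← zpow_add₀ (two_ne_zero : (2:ℝ) ≠ 0)]
      have : (-(2*(m:ℤ)) + ((2*m+2 : ℕ) : ℤ)) = 2 := by push_cast; ring
      rw [this]; norm_num
    rw [T, Finset.sum_eq_single_of_mem m (Finset.mem_range.2 (by omega))]
    · have hlo : 2 ≤ |(2:ℝ) ^ (-(2*(m:ℤ))) * ω| := by
        rw [abs_zpow_mul]
        have := mul_le_mul_of_nonneg_left h1.le hp.le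
        linarith
      have hhi : |(2:ℝ) ^ (-(2*(m:ℤ))) * ω| ≤ 4 := by
        rw [abs_zpow_mul]
        have := mul_le_mul_of_nonneg_left h2.le hp.le
        linarith
      rw [psi1_sq_high hlo hhi, abs_zpow_mul]
      have : (2:ℝ) ^ (-(2*(m:ℤ))) * |ω| / 2 = 2 ^ ((1:ℤ) - 2*(↑(m+1):ℤ)) * |ω| := by
        rw [div_eq_iff (two_ne_zero : (2:ℝ) ≠ 0), mul_right_comm,
          ← zpow_add_one₀ (two_ne_zero : (2:ℝ) ≠ 0)]
        congr 2
        push_cast; ring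
      rw [this]
    · intro j hj hjm
      apply psi1_sq_zero_big
      rw [abs_zpow_mul]
      have hj' : j < m + 1 := Finset.mem_range.1 hj
      have hA : (2:ℝ) ^ (2-2*(m:ℤ)) ≤ 2 ^ (-(2*(j:ℤ))) := by
        apply zpow2_le
        have : j + 1 ≤ m := by omega
        omega
      have e5 : (2:ℝ) ^ (2-2*(m:ℤ)) * 2 ^ (2*m+1 : ℕ) = 8 := by
        rw [← zpow_natCast (2:ℝ) (2*m+1), ← zpow_add₀ (two_ne_zero : (2:ℝ) ≠ 0)]
        have : ((2-2*(m:ℤ)) + ((2*m+1 : ℕ) : ℤ)) = 3 := by push_cast; ring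
        rw [this]; norm_num
      have hpA := zpow2_pos (2-2*(m:ℤ))
      have hB := mul_le_mul_of_nonneg_left h1.le hpA.le
      have hC := mul_le_mul_of_nonneg_right hA (abs_nonneg ω)
      linarith
  · intro ω h
    rcases h with h | h
    · exact T_zero_small _ h
    · apply T_zero_big
      rwa [zpow_natCast]
end
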